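/- Let A be a non-empty open (E,F)-invex subset of ℝ^n and let H : ℝ^n → ℝ be differentiable on A. If H is (E,F)-preinvex on A, then H is (E,F)-invex on A, i.e., for all x, y ∈ A, H(E(x)) − H(F(y)) ≥ ⟨∇H(F(y)), G(E(x), F(y))⟩. -/

import Mathlib

open RealInnerProductSpace

/-- A differentiable (E,F)-preinvex function on a nonempty open
(E,F)-invex set `A ⊆ ℝⁿ` is (E,F)-invex:
`H (E x) - H (F y) ≥ ⟪∇H (F y), G (E x) (F y)⟫` for all `x, y ∈ A`. -/
theorem EF_preinvex_imp_EF_invex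
    {n : ℕ} (A : Set (EuclideanSpace ℝ (Fin n))) (hA : A.Nonempty) (hopen : IsOpen A)
    (E F : EuclideanSpace ℝ (Fin n) → EuclideanSpace ℝ (Fin n))
    (G : EuclideanSpace ℝ (Fin n) → EuclideanSpace ℝ (Fin n) → EuclideanSpace ℝ (Fin n))
    (hinvex : ∀ x ∈ A, ∀ y ∈ A, ∀ μ ∈ Set.Icc (0:ℝ) 1,
      F y + μ • G (E x) (F y) ∈ A)
    (H : EuclideanSpace ℝ (Fin n) → ℝ)
    (hdiff : ∀ z ∈ A, DifferentiableAt ℝ H z)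
    (hpre : ∀ x ∈ A, ∀ y ∈ A, ∀ μ ∈ Set.Icc (0:ℝ) 1,
      H (F y + μ • G (E x) (F y)) ≤ μ * H (E x) + (1 - μ) * H (F y)) :
    ∀ x ∈ A, ∀ y ∈ A,
      H (E x) - H (F y) ≥ ⟪gradient H (F y), G (E x) (F y)⟫ := by
  intro x hx y hy
  set v := G (E x) (F y) with hv
  have hFy : F y ∈ A := by
    have := hinvex x hx y hy 0 (by norm_num)
    simpa using this
  have hd := hdiff (F y) hFy
  have hgrad : HasGradientAt H (gradient H (F y)) (F y) := hd.hasGradientAt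
  have hline : HasDerivAt (fun μ : ℝ => F y + μ • v) v 0 := by
    simpa using ((hasDerivAt_id (0:ℝ)).smul_const v).const_add (F y)
  have hcomp : HasDerivAt (fun μ : ℝ => H (F y + μ • v))
      ⟪gradient H (F y), v⟫ 0 := by
    have h1 := hgrad.hasFDerivAt
    rw [show F y = F y + (0:ℝ) • v by simp] at h1
    have h2 := h1.comp_hasDerivAt 0 hline
    simp [InnerProductSpace.toDual_apply_apply] at h2 ⊢
    exact h2
  set f : ℝ → ℝ := fun μ => H (F y + μ • v) with hf
  set c := H (E x) - H (F y) with hc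
  have hslope : Filter.Tendsto (slope f 0) (nhdsWithin 0 (Set.Ioi 0))
      (nhds ⟪gradient H (F y), v⟫) :=
    (hasDerivAt_iff_tendsto_slope.mp hcomp).mono_left
      (nhdsWithin_mono _ (fun z hz => ne_of_gt hz))
  have hev : ∀ᶠ μ in nhdsWithin 0 (Set.Ioi 0), slope f 0 μ ≤ c := by
    filter_upwards [Ioc_mem_nhdsGT (by norm_num : (0:ℝ) < 1)]
      with μ hμ
    have hpre' := hpre x hx y hy μ ⟨le_of_lt hμ.1, hμ.2⟩
    have hf0 : f 0 = H (F y) := by simp [hf]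
    have : f μ - f 0 ≤ μ * c := by
      rw [hf0]; simp only [hf, hc]; linarith [hpre']
    have hμ0 : (0:ℝ) < μ := hμ.1
    rw [slope_def_field, sub_zero, div_le_iff₀ hμ0]
    simpa [mul_comm] using this
  exact le_of_tendsto hslope hev
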